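/- Completeness of structural alignment at depth d: Let q be a pattern query, N a node with ⟦q(N)⟧ = (⊤, Γ') for some scope Γ', and let p be a subpattern occurrence of q located at a child-index path π of length d ≥ 1 in q. Let M be the node reached from N by following the same child-index path π. If M = ⟦g⟧_{Γ,μ} for some node generator g, attribute scope Γ, and node scope μ, then Align_d(q, g) = ⊤. Consequently, if Align_i(q, g) = ⊥, then no node matching q can have the generated node ⟦g⟧_{Γ,μ} bound at any subpattern position at depth i. -/

import Mathlib

open Classical
noncomputable section

/-! ### Abstract syntax trees -/

/-- An AST node: a label, an attribute map, and a list of children.  The type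
`Attr` stands for the finite partial attribute maps `Σ_M ⇀ 𝔻`. -/
inductive ASTNode (L : Type) (Attr : Type) : Type where
  | mk : L → Attr → List (ASTNode L Attr) → ASTNode L Attr

namespace ASTNode

variable {L Attr : Type}

def label : ASTNode L Attr → L
  | .mk ℓ _ _ => ℓ

def attrs : ASTNode L Attr → Attr
  | .mk _ A _ => A

def children : ASTNode L Attr → List (ASTNode L Attr)
  | .mk _ _ ns => ns

end ASTNode

/-! ### Scopes -/

/-- A scope: a partial map from node variables to attribute maps. -/
def Scope (I : Type) (Attr : Type) := I → Option Attr

def emptyScope {I Attr : Type} : Scope I Attr := fun _ => none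

/-- Left-biased union of scopes. -/
def Scope.union {I Attr : Type} (Γ₁ Γ₂ : Scope I Attr) : Scope I Attr :=
  fun i => (Γ₁ i).orElse (fun _ => Γ₂ i)

/-- `{i ↦ A} ∪ Γ`. -/
def Scope.insert {I Attr : Type} (i : I) (A : Attr) (Γ : Scope I Attr) : Scope I Attr :=
  fun j => if j = i then some A else Γ j

/-! ### Pattern queries -/

/-- Pattern queries: `AnyNode`, or `Match(ℓ, i, [q₁,…,qₙ], θ)` with `θ` a Boolean
predicate on scopes. -/
inductive Pattern (L : Type) (Attr : Type) (I : Type) : Type where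
  | any : Pattern L Attr I
  | node : L → I → List (Pattern L Attr I) → (Scope I Attr → Bool) → Pattern L Attr I

variable {L Attr I : Type}

mutual
/-- Pattern evaluation `⟦q(N)⟧`, returning a Boolean and a scope. -/
def evalPattern : Pattern L Attr I → ASTNode L Attr → Bool × Scope I Attr
  | .any, _ => (true, emptyScope)
  | .node ℓq i qs θ, .mk ℓ A ns =>
      match evalChildren qs ns with
      | none => (false, emptyScope)
      | some Γc =>
          let Γ : Scope I Attr := Scope.insert i A Γc
          if ℓq = ℓ ∧ θ Γ = true then (true, Γ) else (false, emptyScope)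

/-- Evaluate the children: succeeds (returning the union of the child scopes)
iff the lists have equal length and every child pattern matches. -/
def evalChildren : List (Pattern L Attr I) → List (ASTNode L Attr) → Option (Scope I Attr)
  | [], [] => some emptyScope
  | q :: qs, n :: ns =>
      match evalPattern q n, evalChildren qs ns with
      | (true, Γ₁), some Γ₂ => some (Γ₁.union Γ₂)
      | _, _ => none
  | _, _ => none
end

mutual
/-- The descendants `D(N)` of a node (as a list). -/
def ASTNode.descendants : ASTNode L Attr → List (ASTNode L Attr)
  | .mk ℓ A ns => .mk ℓ A ns :: descendantsList ns

def descendantsList : List (ASTNode L Attr) → List (ASTNode L Attr)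
  | [] => []
  | n :: ns => n.descendants ++ descendantsList ns
end

/-- The match set `q(N)`: descendants of `N` on which `q` evaluates to true. -/
def matchSet (q : Pattern L Attr I) (N : ASTNode L Attr) : Set (ASTNode L Attr) :=
  {N' | N' ∈ N.descendants ∧ ∃ Γ, evalPattern q N' = (true, Γ)}

/-! ### Generalized multisets -/

/-- Lift a list (in particular, a set given as a duplicate-free list) to the
generalized multiset counting occurrences. -/
def listGM (l : List (ASTNode L Attr)) : ASTNode L Attr →₀ ℤ :=
  (l.map (fun x => Finsupp.single x (1 : ℤ))).sum

/-- A view `V_q` is correct for `N` if it maps elements of `q(N)` to `1` and all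
other nodes to `0`. -/
def CorrectView (q : Pattern L Attr I) (N : ASTNode L Attr) (V : ASTNode L Attr →₀ ℤ) : Prop :=
  ∀ x, V x = if x ∈ matchSet q N then 1 else 0

/-- `IVM(q, V, Δ)`: add `Δ(x)` to `V(x)` at every `x` on which `q` evaluates to true. -/
def IVM (q : Pattern L Attr I) (V Δ : ASTNode L Attr →₀ ℤ) : ASTNode L Attr →₀ ℤ :=
  V + Δ.filter (fun x => (evalPattern q x).1 = true)

/-! ### Replacement, depth, ancestors -/

mutual
/-- The replacement `N[R\R']`. -/
def ASTNode.repl (R R' : ASTNode L Attr) : ASTNode L Attr → ASTNode L Attr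
  | .mk ℓ A ns =>
      if ASTNode.mk ℓ A ns = R then R' else .mk ℓ A (replList R R' ns)

def replList (R R' : ASTNode L Attr) : List (ASTNode L Attr) → List (ASTNode L Attr)
  | [] => []
  | n :: ns => ASTNode.repl R R' n :: replList R R' ns
end

mutual
/-- The depth `dep(q)` of a pattern. -/
def Pattern.depth : Pattern L Attr I → ℕ
  | .any => 0
  | .node _ _ qs _ => 1 + depthList qs

def depthList : List (Pattern L Attr I) → ℕ
  | [] => 0
  | q :: qs => max q.depth (depthList qs)
end

/-- `descAt d N M`: `M` is a descendant of `N` at distance exactly `d`. -/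
def descAt : ℕ → ASTNode L Attr → ASTNode L Attr → Prop
  | 0, N, M => N = M
  | d + 1, N, M => ∃ c ∈ N.children, descAt d c M

/-- The generalized multiset `{| Aⁱ(R) ↦ 1 : 1 ≤ i ≤ d, Aⁱ(R) exists relative to N |}`
of ancestors of `R` (in `N`) at distances `1,…,d`. -/
def ancestorsGM (N R : ASTNode L Attr) (d : ℕ) : ASTNode L Attr →₀ ℤ :=
  ∑ i ∈ Finset.Icc 1 d, listGM (N.descendants.filter (fun A => decide (descAt i A R)))

/-- The maximal search set `⌈R, R'⌉_q` (ancestors of `R` are taken in `N`,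
ancestors of `R'` in `N[R\R']`). -/
def maxSearchSet (q : Pattern L Attr I) (N R R' : ASTNode L Attr) : ASTNode L Attr →₀ ℤ :=
  listGM R.descendants + ancestorsGM N R q.depth
    - listGM R'.descendants - ancestorsGM (N.repl R R') R' q.depth

/-! ### Node generators -/

/-- Node generators: `Reuse(i)` or `Gen(ℓ, ā, [g₁,…,gₙ])`, where the attribute
expressions `ā` are collectively a function from scopes to attribute maps. -/
inductive NodeGen (L : Type) (Attr : Type) (I : Type) : Type where
  | reuse : I → NodeGen L Attr I
  | gen : L → (Scope I Attr → Attr) → List (NodeGen L Attr I) → NodeGen L Attr I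

mutual
/-- Generator evaluation `⟦g⟧_{Γ,μ}`. -/
def evalGen (Γ : Scope I Attr) (μ : I → ASTNode L Attr) : NodeGen L Attr I → ASTNode L Attr
  | .reuse i => μ i
  | .gen ℓ a gs => .mk ℓ (a Γ) (evalGenList Γ μ gs)

def evalGenList (Γ : Scope I Attr) (μ : I → ASTNode L Attr) :
    List (NodeGen L Attr I) → List (ASTNode L Attr)
  | [] => []
  | g :: gs => evalGen Γ μ g :: evalGenList Γ μ gs
end

mutual
/-- The matched node pairs `MP(q, R)`. -/
def MP : Pattern L Attr I → ASTNode L Attr → List (Pattern L Attr I × ASTNode L Attr)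
  | .any, R => [(.any, R)]
  | .node ℓ i qs θ, .mk ℓ' A ns => (.node ℓ i qs θ, .mk ℓ' A ns) :: MPList qs ns

def MPList : List (Pattern L Attr I) → List (ASTNode L Attr) →
    List (Pattern L Attr I × ASTNode L Attr)
  | q :: qs, n :: ns => MP q n ++ MPList qs ns
  | _, _ => []
end

mutual
/-- The generated node pairs `GP(g, Γ, μ)`. -/
def GP (Γ : Scope I Attr) (μ : I → ASTNode L Attr) :
    NodeGen L Attr I → List (NodeGen L Attr I × ASTNode L Attr)
  | .reuse i => [(.reuse i, μ i)]
  | .gen ℓ a gs => (.gen ℓ a gs, evalGen Γ μ (.gen ℓ a gs)) :: GPList Γ μ gs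

def GPList (Γ : Scope I Attr) (μ : I → ASTNode L Attr) :
    List (NodeGen L Attr I) → List (NodeGen L Attr I × ASTNode L Attr)
  | [] => []
  | g :: gs => GP Γ μ g ++ GPList Γ μ gs
end

/-- A generator `g` is safe for `(q, R)` with scopes `Γ, μ`: it reuses exactly
the wildcard-matched subtrees of `R`. -/
def SafeGen (q : Pattern L Attr I) (R : ASTNode L Attr) (g : NodeGen L Attr I)
    (Γ : Scope I Attr) (μ : I → ASTNode L Attr) : Prop :=
  ∀ N : ASTNode L Attr,
    (Pattern.any, N) ∈ MP q R ↔ ∃ i, μ i = N ∧ (NodeGen.reuse i, N) ∈ GP Γ μ g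

mutual
/-- `|g|`: the number of `Gen` and `Reuse` terms in `g`. -/
def NodeGen.size : NodeGen L Attr I → ℕ
  | .reuse _ => 1
  | .gen _ _ gs => 1 + sizeGenList gs

def sizeGenList : List (NodeGen L Attr I) → ℕ
  | [] => 0
  | g :: gs => g.size + sizeGenList gs
end

mutual
/-- `|q|`: the number of `Match` and `AnyNode` terms in `q`. -/
def Pattern.size : Pattern L Attr I → ℕ
  | .any => 1
  | .node _ _ qs _ => 1 + sizePatList qs

def sizePatList : List (Pattern L Attr I) → ℕ
  | [] => 0
  | q :: qs => q.size + sizePatList qs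
end

/-! ### Paths, occurrences, alignment -/

/-- The node reached from `N` by following the child-index path `π`. -/
def nodeAt (N : ASTNode L Attr) (π : List ℕ) : Option (ASTNode L Attr) :=
  match π with
  | [] => some N
  | k :: π' => (N.children[k]?).bind fun c => nodeAt c π'

/-- The subpattern occurrence of `q` located at the child-index path `π`. -/
def subAt (q : Pattern L Attr I) (π : List ℕ) : Option (Pattern L Attr I) :=
  match π, q with
  | [], q => some q
  | _ :: _, .any => none
  | k :: π', .node _ _ qs _ => (qs[k]?).bind fun qk => subAt qk π'

/-- `π` is an occurrence of a `Match` subpattern with node variable `i`. -/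
def IsMatchVarOcc (q : Pattern L Attr I) (π : List ℕ) (i : I) : Prop :=
  ∃ ℓ qs θ, subAt q π = some (.node ℓ i qs θ)

/-- `π` is an occurrence of a `Match` subpattern of `q`. -/
def IsMatchOcc (q : Pattern L Attr I) (π : List ℕ) : Prop :=
  ∃ i, IsMatchVarOcc q π i

/-- The node variables of the `Match` subpatterns of `q`. -/
def patVars (q : Pattern L Attr I) : Set I :=
  {i | ∃ π, IsMatchVarOcc q π i}

/-- The scope `Γ_σ` induced by an assignment `σ` of nodes to (paths of)
`Match`-subpattern occurrences of `q`: it maps the node variable of each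
`Match` subpattern to the attribute map of the assigned node. -/
def scopeOf (q : Pattern L Attr I) (σ : List ℕ → ASTNode L Attr) : Scope I Attr :=
  fun i => if h : ∃ π, IsMatchVarOcc q π i then some (σ h.choose).attrs else none

mutual
/-- Structural alignment at depth 0. -/
def align0 : Pattern L Attr I → NodeGen L Attr I → Bool
  | .any, _ => true
  | _, .reuse _ => true
  | .node ℓ _ qs _, .gen ℓ' _ gs =>
      if ℓ = ℓ' ∧ qs.length = gs.length then align0List qs gs else false

def align0List : List (Pattern L Attr I) → List (NodeGen L Attr I) → Bool
  | [], [] => true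
  | q :: qs, g :: gs => align0 q g && align0List qs gs
  | _, _ => false
end

/-- Structural alignment at depth `d`. -/
def alignD : ℕ → Pattern L Attr I → NodeGen L Attr I → Bool
  | 0, q, g => align0 q g
  | _ + 1, .any, _ => false
  | d + 1, .node _ _ qs _, g => qs.attach.any (fun qk => alignD d qk.1 g)

end


section AuxAlign

variable {L Attr I : Type}

lemma evalPattern_node_true {ℓq : L} {i : I} {qs : List (Pattern L Attr I)}
    {θ : Scope I Attr → Bool} {ℓ : L} {A : Attr} {ns : List (ASTNode L Attr)}
    {Γ' : Scope I Attr}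
    (h : evalPattern (.node ℓq i qs θ) (.mk ℓ A ns) = (true, Γ')) :
    ℓq = ℓ ∧ ∃ Γc, evalChildren qs ns = some Γc := by
  rw [evalPattern] at h
  rcases hE : evalChildren qs ns with _ | Γc
  · rw [hE] at h; simp at h
  · rw [hE] at h
    refine ⟨?_, Γc, rfl⟩
    by_contra hne
    simp [hne] at h

lemma evalChildren_length {qs : List (Pattern L Attr I)} {ns : List (ASTNode L Attr)}
    {Γc : Scope I Attr} (h : evalChildren qs ns = some Γc) : qs.length = ns.length := by
  induction qs generalizing ns Γc with
  | nil => cases ns with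
    | nil => rfl
    | cons n ns => simp [evalChildren] at h
  | cons q qs ih =>
    cases ns with
    | nil => simp [evalChildren] at h
    | cons n ns =>
      rw [evalChildren] at h
      rcases hE : evalPattern q n with ⟨b, Γ₁⟩
      rcases hC : evalChildren qs ns with _ | Γ₂ <;> rw [hE, hC] at h <;> cases b <;>
        simp at h
      simp [ih hC]

lemma evalChildren_get {qs : List (Pattern L Attr I)} {ns : List (ASTNode L Attr)}
    {Γc : Scope I Attr} (h : evalChildren qs ns = some Γc)
    {k : ℕ} {qk : Pattern L Attr I} (hk : qs[k]? = some qk) :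
    ∃ nk Γk, ns[k]? = some nk ∧ evalPattern qk nk = (true, Γk) := by
  induction qs generalizing ns Γc k with
  | nil => simp at hk
  | cons q qs ih =>
    cases ns with
    | nil => simp [evalChildren] at h
    | cons n ns =>
      rw [evalChildren] at h
      rcases hE : evalPattern q n with ⟨b, Γ₁⟩
      rcases hC : evalChildren qs ns with _ | Γ₂ <;> rw [hE, hC] at h <;> cases b <;>
        simp at h
      cases k with
      | zero => simp at hk; exact ⟨n, Γ₁, by simp, by rw [← hk]; exact hE⟩
      | succ k =>
        simp only [List.getElem?_cons_succ] at hk ⊢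
        exact ih hC hk

lemma evalGenList_length (Γ : Scope I Attr) (μ : I → ASTNode L Attr)
    (gs : List (NodeGen L Attr I)) : (evalGenList Γ μ gs).length = gs.length := by
  induction gs with
  | nil => rfl
  | cons g gs ih => rw [evalGenList]; simp [ih]

mutual
theorem align0_complete (p : Pattern L Attr I) (M : ASTNode L Attr)
    (Γ'' Γ : Scope I Attr) (μ : I → ASTNode L Attr) (g : NodeGen L Attr I)
    (hp : evalPattern p M = (true, Γ'')) (hM : M = evalGen Γ μ g) :
    align0 p g = true := by
  cases p with
  | any => rw [align0]
  | node ℓq i qs θ =>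
    cases g with
    | reuse j => rw [align0]; simp
    | gen ℓ' a gs =>
      rw [evalGen] at hM
      cases M with
      | mk ℓ A ns =>
        cases hM
        obtain ⟨hl, Γc, hC⟩ := evalPattern_node_true hp
        have hlen : qs.length = gs.length := by
          rw [evalChildren_length hC, evalGenList_length]
        rw [align0, if_pos ⟨hl, hlen⟩]
        exact align0List_complete qs (evalGenList Γ μ gs) Γc Γ μ gs hC rfl

theorem align0List_complete (qs : List (Pattern L Attr I)) (ns : List (ASTNode L Attr))
    (Γc Γ : Scope I Attr) (μ : I → ASTNode L Attr) (gs : List (NodeGen L Attr I))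
    (hC : evalChildren qs ns = some Γc) (hns : ns = evalGenList Γ μ gs) :
    align0List qs gs = true := by
  cases gs with
  | nil =>
    rw [evalGenList] at hns
    subst hns
    cases qs with
    | nil => rw [align0List]
    | cons q qs => simp [evalChildren] at hC
  | cons g gs =>
    rw [evalGenList] at hns
    subst hns
    cases qs with
    | nil => simp [evalChildren] at hC
    | cons q qs =>
      rw [evalChildren] at hC
      rcases hE : evalPattern q (evalGen Γ μ g) with ⟨b, Γ₁⟩
      rcases hC' : evalChildren qs (evalGenList Γ μ gs) with _ | Γ₂ <;>
        rw [hE, hC'] at hC <;> cases b <;> simp at hC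
      rw [align0List, align0_complete q (evalGen Γ μ g) Γ₁ Γ μ g hE rfl,
        align0List_complete qs (evalGenList Γ μ gs) Γ₂ Γ μ gs hC' rfl]
      rfl
end

theorem alignD_complete_aux (Γ : Scope I Attr) (μ : I → ASTNode L Attr)
    (g : NodeGen L Attr I) :
    ∀ (π : List ℕ) (q : Pattern L Attr I) (N : ASTNode L Attr) (Γ' : Scope I Attr),
      evalPattern q N = (true, Γ') → ∀ p, subAt q π = some p →
      nodeAt N π = some (evalGen Γ μ g) → π ≠ [] →
      alignD π.length q g = true := by
  intro π
  induction π with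
  | nil => intro _ _ _ _ _ _ _ h; exact absurd rfl h
  | cons k π' ih =>
    intro q N Γ' hq p hp hM _
    cases q with
    | any => rw [subAt] at hp; exact absurd hp (by simp)
    | node ℓq i qs θ =>
      cases N with
      | mk ℓ A ns =>
        obtain ⟨hl, Γc, hC⟩ := evalPattern_node_true hq
        rw [subAt] at hp
        rcases hqk : qs[k]? with _ | qk
        · rw [hqk] at hp; simp at hp
        · rw [hqk] at hp; simp only [Option.bind_some] at hp
          obtain ⟨nk, Γk, hnk, hek⟩ := evalChildren_get hC hqk
          rw [nodeAt] at hM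
          have hch : (ASTNode.mk ℓ A ns).children = ns := rfl
          rw [hch, hnk, Option.bind_some] at hM
          have hmem : qk ∈ qs := by
            have := List.getElem?_eq_some_iff.mp hqk
            obtain ⟨hlt, hget⟩ := this
            exact hget ▸ List.getElem_mem hlt
          have hkey : alignD π'.length qk g = true := by
            cases π' with
            | nil =>
              rw [nodeAt] at hM
              simp only [Option.some.injEq] at hM
              simp only [List.length_nil]
              rw [alignD]
              exact align0_complete qk nk Γk Γ μ g hek hM
            | cons k' π'' =>
              exact ih qk nk Γk hek p hp hM (by simp)
          show alignD (π'.length + 1) (Pattern.node ℓq i qs θ) g = true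
          rw [alignD]
          rw [List.any_eq_true]
          exact ⟨⟨qk, hmem⟩, by simp [hkey]⟩

end AuxAlign

/-- **Completeness of structural alignment at depth `d`.** If
`⟦q(N)⟧ = (⊤, Γ')`, there is a subpattern occurrence of `q` at a child-index
path `π` of length `d ≥ 1`, and the node reached from `N` by `π` is generated,
i.e. equals `⟦g⟧_{Γ,μ}`, then `Align_d(q, g) = ⊤`. -/
theorem alignD_complete {L Attr I : Type}
    (q : Pattern L Attr I) (N : ASTNode L Attr) (Γ' : Scope I Attr)
    (hq : evalPattern q N = (true, Γ'))
    (π : List ℕ) (d : ℕ) (hd : 1 ≤ d) (hlen : π.length = d)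
    (p : Pattern L Attr I) (hp : subAt q π = some p)
    (g : NodeGen L Attr I) (Γ : Scope I Attr) (μ : I → ASTNode L Attr)
    (hM : nodeAt N π = some (evalGen Γ μ g)) :
    alignD d q g = true := by
  have hne : π ≠ [] := by
    intro h; subst h; simp at hlen; omega
  subst hlen
  exact alignD_complete_aux Γ μ g π q N Γ' hq p hp hM hne
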